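/- With notation as in the context, for each 0 ≤ i ≤ e the polynomial f_i ∈ K[T₊(M)][x,y] satisfies f_i = m_i + Σ_{m ∈ M_i} ( Σ_{P a path from m_i to m} a_P ) · m, where M_i = { m : m a monomial of K[x,y] with m ≺ m_i and deg(m) = deg(m_i) }. -/

import Mathlib

open MvPolynomial
open scoped BigOperators

/-- Membership of the monomial `x^{m.1} y^{m.2}` in the monomial ideal with minimal
generators `m_j = x^{a j} y^{b j}`, `0 ≤ j ≤ e`. -/
def InM (e : ℕ) (a b : ℕ → ℕ) (m : ℕ × ℕ) : Prop :=
  ∃ j ≤ e, a j ≤ m.1 ∧ b j ≤ m.2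

/-- `jOf e b q` is the largest `j ≤ e` with `b j ≤ q`; for a monomial
`m = x^p y^q ∈ M` this computes `j(m) = max { j : m_j divides m }`. -/
def jOf (e : ℕ) (b : ℕ → ℕ) (q : ℕ) : ℕ :=
  Nat.findGreatest (fun j => b j ≤ q) e

/-- `Arrow α β e a b i ℓ`: the pair `c_i^ℓ = (m_i, ℓ)` with `ℓ > 0` is a positive
significant arrow, i.e. `m_i r^ℓ` is a monomial not in `M` and `w_i r^ℓ ∈ M`, where
`r = x^β y^{-α}` and `w_i = lcm(m_{i-1}, m_i)`. -/
def Arrow (α β e : ℕ) (a b : ℕ → ℕ) (i ℓ : ℕ) : Prop :=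
  1 ≤ i ∧ i ≤ e ∧ 1 ≤ ℓ ∧ ℓ * α ≤ b i ∧
  ¬ InM e a b (a i + ℓ * β, b i - ℓ * α) ∧
  InM e a b (a (i - 1) + ℓ * β, b i - ℓ * α)

/-- `IsPath α β e a b i P`: the list of arrows `P` is a path from the generator `m_i`.
Either `P` is a single significant arrow at `i`, or `P` is a path from `m_{i-1}`, or
`P = c_i^ℓ :: P'` with `P'` a path from `m_{j(w_i r^ℓ)}`. -/
inductive IsPath (α β e : ℕ) (a b : ℕ → ℕ) : ℕ → List (ℕ × ℕ) → Prop
  | single (i ℓ : ℕ) : Arrow α β e a b i ℓ → IsPath α β e a b i [(i, ℓ)]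
  | prev (i : ℕ) (P : List (ℕ × ℕ)) : 1 ≤ i → IsPath α β e a b (i - 1) P →
      IsPath α β e a b i P
  | cons (i ℓ : ℕ) (P : List (ℕ × ℕ)) : Arrow α β e a b i ℓ → P ≠ [] →
      IsPath α β e a b (jOf e b (b i - ℓ * α)) P →
      IsPath α β e a b i ((i, ℓ) :: P)

/-- The length `ℓ(P)` of a path. -/
def plen (P : List (ℕ × ℕ)) : ℕ := (P.map Prod.snd).sum

/-- The coefficient ring `K[T₊(M)]`: polynomials in the (potential) arrow variables
`c_i^ℓ`, indexed by pairs `(i, ℓ)`. -/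
abbrev ArrowRing (K : Type*) [Field K] := MvPolynomial (ℕ × ℕ) K

/-- `a_P`, the product of the arrow variables along a path `P`. -/
noncomputable def aP {K : Type*} [Field K] (P : List (ℕ × ℕ)) : ArrowRing K :=
  (P.map fun t => (X t : ArrowRing K)).prod

/-- The ring `K[T₊(M)][x,y]`, with `x,y`-monomials indexed by `ℕ × ℕ`. -/
abbrev XYRing (K : Type*) [Field K] := AddMonoidAlgebra (ArrowRing K) (ℕ × ℕ)

/-- The element `c · x^{m.1} y^{m.2}` of `K[T₊(M)][x,y]`. -/
noncomputable def xymon {K : Type*} [Field K] (m : ℕ × ℕ) (c : ArrowRing K) : XYRing K :=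
  AddMonoidAlgebra.single m c

/-- The lexicographic order on monomials of `K[x,y]` with `x ≺ y`. -/
def LexLt (m m' : ℕ × ℕ) : Prop :=
  m.2 < m'.2 ∨ (m.2 = m'.2 ∧ m.1 < m'.1)

/-- `EvainRec α β e a b K F`: the family `F 0, …, F e` satisfies Evain's recursion
`f_0 = m_0` and
`f_i = (m_i/m_{i-1}) f_{i-1} + Σ_{c_i^ℓ ∈ T₊(M)} c_i^ℓ (m_i r^ℓ / m_{j(w_i r^ℓ)}) f_{j(w_i r^ℓ)}`,
written multiplied through by `x^{a_{i-1} - a_i}` so that all terms are honest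
polynomials. -/
def EvainRec (α β e : ℕ) (a b : ℕ → ℕ) {K : Type*} [Field K]
    (F : ℕ → XYRing K) : Prop :=
  F 0 = xymon (a 0, 0) 1 ∧
  ∀ i, 1 ≤ i → i ≤ e →
    xymon (a (i - 1) - a i, 0) (1 : ArrowRing K) * F i =
      xymon (0, b i - b (i - 1)) (1 : ArrowRing K) * F (i - 1) +
      ∑ᶠ ℓ ∈ {ℓ : ℕ | Arrow α β e a b i ℓ},
        xymon (a (i - 1) + ℓ * β - a (jOf e b (b i - ℓ * α)),
               b i - ℓ * α - b (jOf e b (b i - ℓ * α)))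
          (X (i, ℓ) : ArrowRing K) * F (jOf e b (b i - ℓ * α))

/-- The hypotheses on the data `α, β, e, a, b` describing a monomial ideal
`M = ⟨m_0, …, m_e⟩ ⊆ K[x,y]` of finite colength with minimal generators
`m_i = x^{a i} y^{b i}` listed in increasing lexicographic (`x ≺ y`) order, for the
positive grading `deg x = α`, `deg y = β` with `α, β` coprime. -/
def MonIdealData (α β e : ℕ) (a b : ℕ → ℕ) : Prop :=
  0 < α ∧ 0 < β ∧ Nat.Coprime α β ∧
  (∀ i, i < e → a (i + 1) < a i) ∧
  (∀ i, i < e → b i < b (i + 1)) ∧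
  b 0 = 0 ∧ a e = 0

/-- The set of paths from the generator `m_i` to the monomial `m = m_i r^{ℓ(P)}`. -/
def pathsTo (α β e : ℕ) (a b : ℕ → ℕ) (i : ℕ) (m : ℕ × ℕ) : Set (List (ℕ × ℕ)) :=
  {P | IsPath α β e a b i P ∧ m.1 = a i + plen P * β ∧ m.2 + plen P * α = b i}

/-- The set `M_i` of monomials `m ≺ m_i` of the same degree as `m_i`. -/
def MsetLt (α β : ℕ) (a b : ℕ → ℕ) (i : ℕ) : Set (ℕ × ℕ) :=
  {m : ℕ × ℕ | LexLt m (a i, b i) ∧ α * m.1 + β * m.2 = α * a i + β * b i}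

/-! ### Auxiliary development -/

namespace EvainAux

lemma fsum_toFinset {γ M : Type*} [AddCommMonoid M] {s : Set γ} (hs : s.Finite) (f : γ → M) :
    ∑ᶠ x ∈ s, f x = ∑ x ∈ hs.toFinset, f x := by
  rw [← finsum_mem_coe_finset]
  exact finsum_mem_congr hs.coe_toFinset.symm (fun _ _ => rfl)

section Defs

variable {K : Type*} [Field K] (α β e : ℕ) (a b : ℕ → ℕ)

/-- The set of paths from `m_i` of length `p`. -/
def Tset (i p : ℕ) : Set (List (ℕ × ℕ)) := {P | IsPath α β e a b i P ∧ plen P = p}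

/-- The set of arrows at `i`. -/
def Aset (i : ℕ) : Set ℕ := {ℓ | Arrow α β e a b i ℓ}

end Defs

variable {α β e : ℕ} {a b : ℕ → ℕ}

lemma plen_cons (t : ℕ × ℕ) (P : List (ℕ × ℕ)) : plen (t :: P) = t.2 + plen P := by
  simp [plen]

lemma plen_single (t : ℕ × ℕ) : plen [t] = t.2 := by simp [plen]

section Basic

variable (hα : 0 < α) (hβ : 0 < β)
  (hb : ∀ i, i < e → b i < b (i + 1)) (ha : ∀ i, i < e → a (i + 1) < a i)
  (hb0 : b 0 = 0)

include hb in
lemma b_mono : ∀ {j i}, j ≤ i → i ≤ e → b j ≤ b i := by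
  intro j i
  induction i with
  | zero => intro hji _; simp [Nat.le_zero.mp hji]
  | succ n ih =>
    intro hji hie
    rcases Nat.lt_or_ge j (n + 1) with h | h
    · exact le_trans (ih (Nat.lt_succ_iff.mp h) (le_trans (Nat.le_succ n) hie))
        (le_of_lt (hb n (lt_of_lt_of_le (Nat.lt_succ_self n) hie)))
    · have : j = n + 1 := le_antisymm hji h
      subst this; rfl

include hb in
lemma b_strict : ∀ {j i}, j < i → i ≤ e → b j < b i := by
  intro j i hji hie
  have h1 : b j < b (j + 1) := hb j (lt_of_lt_of_le hji hie)
  exact lt_of_lt_of_le h1 (b_mono hb hji hie)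

include ha in
lemma a_anti : ∀ {j i}, j ≤ i → i ≤ e → a i ≤ a j := by
  intro j i
  induction i with
  | zero => intro hji _; simp [Nat.le_zero.mp hji]
  | succ n ih =>
    intro hji hie
    rcases Nat.lt_or_ge j (n + 1) with h | h
    · exact le_trans (le_of_lt (ha n (lt_of_lt_of_le (Nat.lt_succ_self n) hie)))
        (ih (Nat.lt_succ_iff.mp h) (le_trans (Nat.le_succ n) hie))
    · have : j = n + 1 := le_antisymm hji h
      subst this; rfl

lemma jOf_le (q : ℕ) : jOf e b q ≤ e := Nat.findGreatest_le e

include hb0 in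
lemma b_jOf (q : ℕ) : b (jOf e b q) ≤ q :=
  Nat.findGreatest_spec (P := fun j => b j ≤ q) (Nat.zero_le e) (by simp [hb0])

lemma le_jOf {j q : ℕ} (hj : j ≤ e) (h : b j ≤ q) : j ≤ jOf e b q :=
  Nat.le_findGreatest hj h

include hb hb0 in
lemma jOf_lt {i q : ℕ} (hie : i ≤ e) (h : q < b i) : jOf e b q < i := by
  by_contra hc
  push_neg at hc
  have h1 : b i ≤ b (jOf e b q) := b_mono hb hc (jOf_le q)
  have h2 : b (jOf e b q) ≤ q := b_jOf hb0 q
  omega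

include hα in
lemma arrow_blt {i ℓ : ℕ} (hA : Arrow α β e a b i ℓ) : b i - ℓ * α < b i := by
  have h1 : 1 ≤ ℓ := hA.2.2.1
  have h2 : ℓ * α ≤ b i := hA.2.2.2.1
  have h3 : 0 < ℓ * α := Nat.mul_pos h1 hα
  omega

include hα hb hb0 in
lemma arrow_jOf_lt {i ℓ : ℕ} (hA : Arrow α β e a b i ℓ) :
    jOf e b (b i - ℓ * α) < i :=
  jOf_lt hb hb0 hA.2.1 (arrow_blt hα hA)

include ha hb0 in
lemma arrow_a_jOf_le {i ℓ : ℕ} (hA : Arrow α β e a b i ℓ) :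
    a (jOf e b (b i - ℓ * α)) ≤ a (i - 1) + ℓ * β := by
  obtain ⟨j', hj'e, hj'1, hj'2⟩ := hA.2.2.2.2.2
  have h1 : j' ≤ jOf e b (b i - ℓ * α) := le_jOf hj'e hj'2
  exact le_trans (a_anti ha h1 (jOf_le _)) hj'1

end Basic

section Paths

lemma path_one_le {i : ℕ} {P : List (ℕ × ℕ)} (h : IsPath α β e a b i P) : 1 ≤ i := by
  induction h with
  | single i ℓ hA => exact hA.1
  | prev i P h1 _ _ => exact h1
  | cons i ℓ P hA _ _ _ => exact hA.1

lemma path_ne_nil {i : ℕ} {P : List (ℕ × ℕ)} (h : IsPath α β e a b i P) : P ≠ [] := by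
  induction h with
  | single i ℓ hA => simp
  | prev i P _ _ ih => exact ih
  | cons i ℓ P _ _ _ _ => simp

lemma path_mem_arrow {i : ℕ} {P : List (ℕ × ℕ)} (h : IsPath α β e a b i P) :
    ∀ t ∈ P, Arrow α β e a b t.1 t.2 := by
  induction h with
  | single i ℓ hA => intro t ht; simp at ht; subst ht; exact hA
  | prev _ _ _ _ ih => exact ih
  | cons i ℓ P hA _ _ ih =>
    intro t ht
    rcases List.mem_cons.mp ht with h | h
    · subst h; exact hA
    · exact ih t h

lemma path_plen_pos {i : ℕ} {P : List (ℕ × ℕ)} (h : IsPath α β e a b i P) :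
    1 ≤ plen P := by
  induction h with
  | single i ℓ hA => rw [plen_single]; exact hA.2.2.1
  | prev _ _ _ _ ih => exact ih
  | cons i ℓ P hA _ _ _ =>
    rw [plen_cons]
    have := hA.2.2.1
    omega

variable (hα : 0 < α) (hb : ∀ i, i < e → b i < b (i + 1)) (hb0 : b 0 = 0)

include hα hb hb0 in
lemma path_idx_le {i : ℕ} {P : List (ℕ × ℕ)} (h : IsPath α β e a b i P) :
    ∀ t ∈ P, t.1 ≤ i := by
  induction h with
  | single i ℓ hA => intro t ht; simp at ht; subst ht; rfl
  | prev i P h1 _ ih => intro t ht; exact le_trans (ih t ht) (Nat.sub_le i 1)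
  | cons i ℓ P hA hne hP ih =>
    intro t ht
    have hj : jOf e b (b i - ℓ * α) < i := arrow_jOf_lt hα hb hb0 hA
    rcases List.mem_cons.mp ht with h | h
    · subst h; rfl
    · exact le_trans (ih t h) (le_of_lt hj)

include hα hb hb0 in
lemma path_plen_le {i : ℕ} {P : List (ℕ × ℕ)} (h : IsPath α β e a b i P) (hie : i ≤ e) :
    plen P * α ≤ b i := by
  induction h with
  | single i ℓ hA => rw [plen_single]; exact hA.2.2.2.1
  | prev i P h1 hP ih =>
    have h2 : i - 1 ≤ e := le_trans (Nat.sub_le i 1) hie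
    exact le_trans (ih h2) (b_mono hb (Nat.sub_le i 1) hie)
  | cons i ℓ P hA hne hP ih =>
    rw [plen_cons]
    show (ℓ + plen P) * α ≤ b i
    rw [Nat.add_mul]
    have h1 : plen P * α ≤ b (jOf e b (b i - ℓ * α)) := ih (jOf_le _)
    have h2 : b (jOf e b (b i - ℓ * α)) ≤ b i - ℓ * α := b_jOf hb0 _
    have h3 : ℓ * α ≤ b i := hA.2.2.2.1
    omega

end Paths

section Finiteness

variable {K : Type*} [Field K]
variable (hα : 0 < α)

include hα in
lemma Aset_finite (i : ℕ) : (Aset α β e a b i).Finite := by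
  apply Set.Finite.subset (Set.finite_Iic (b i))
  intro ℓ hℓ
  have h1 : ℓ * α ≤ b i := hℓ.2.2.2.1
  have h2 : ℓ ≤ ℓ * α := Nat.le_mul_of_pos_right ℓ hα
  exact le_trans h2 h1

lemma Tset_finite (i p : ℕ) : (Tset α β e a b i p).Finite := by
  have hE : (Set.Iic ((e, p) : ℕ × ℕ)).Finite := Set.finite_Iic _
  have : Finite ↥(Set.Iic ((e, p) : ℕ × ℕ)) := hE.to_subtype
  have hL := List.finite_length_le ↥(Set.Iic ((e, p) : ℕ × ℕ)) p
  apply Set.Finite.subset (hL.image (List.map Subtype.val))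
  rintro P ⟨hP, hplen⟩
  have harr := path_mem_arrow hP
  have hone : ∀ x ∈ P.map Prod.snd, 1 ≤ x := by
    intro x hx
    obtain ⟨t, ht, rfl⟩ := List.mem_map.mp hx
    exact (harr t ht).2.2.1
  have hmem : ∀ t ∈ P, t ∈ Set.Iic ((e, p) : ℕ × ℕ) := by
    intro t ht
    rw [Set.mem_Iic, Prod.le_def]
    refine ⟨(harr t ht).2.1, ?_⟩
    have h1 : t.2 ∈ P.map Prod.snd := List.mem_map.mpr ⟨t, ht, rfl⟩
    have h2 : t.2 ≤ (P.map Prod.snd).sum :=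
      List.single_le_sum (fun x _ => Nat.zero_le x) _ h1
    rw [← hplen]; exact h2
  refine ⟨P.attach.map (fun t => ⟨t.1, hmem t.1 t.2⟩), ?_, ?_⟩
  · show (P.attach.map _).length ≤ p
    rw [List.length_map, List.length_attach]
    have h1 : P.length ≤ (P.map Prod.snd).sum := by
      have := List.length_le_sum_of_one_le (P.map Prod.snd) hone
      simpa using this
    rw [← hplen]; exact h1
  · rw [List.map_map]
    exact (List.attach_map_subtype_val P)

end Finiteness


section Sums

variable {K : Type*} [Field K]

lemma xymon_mul (m n : ℕ × ℕ) (c d : ArrowRing K) :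
    xymon m c * xymon n d = xymon (m + n) (c * d) :=
  AddMonoidAlgebra.single_mul_single ..

lemma xymon_zero (m : ℕ × ℕ) : xymon m (0 : ArrowRing K) = 0 :=
  AddMonoidAlgebra.single_eq_zero.mpr rfl

lemma xymon_sum (m : ℕ × ℕ) (s : Finset ℕ) (g : ℕ → ArrowRing K) :
    xymon m (∑ x ∈ s, g x) = ∑ x ∈ s, xymon m (g x) :=
  map_sum (AddMonoidAlgebra.singleAddHom m) g s

lemma xymon_add (m : ℕ × ℕ) (c d : ArrowRing K) :
    xymon m (c + d) = xymon m c + xymon m d := by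
  simp [xymon]

lemma xymon_one_ne_zero (m : ℕ × ℕ) : xymon m (1 : ArrowRing K) ≠ 0 := by
  simp [xymon, AddMonoidAlgebra.single_eq_zero]

lemma aP_cons (t : ℕ × ℕ) (P : List (ℕ × ℕ)) :
    aP (K := K) (t :: P) = X t * aP (K := K) P := by simp [aP]

lemma aP_single (t : ℕ × ℕ) : aP (K := K) [t] = X t := by simp [aP]

lemma finsum_mem_mul_left {γ : Type*} {s : Set γ} (hs : s.Finite) (c : ArrowRing K)
    (f : γ → ArrowRing K) : (∑ᶠ x ∈ s, c * f x) = c * ∑ᶠ x ∈ s, f x := by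
  rw [fsum_toFinset hs, fsum_toFinset hs, Finset.mul_sum]

/-- Sum of `a_P` over paths from `m_i` of length `p`. -/
noncomputable def pathSum (K : Type*) [Field K] (α β e : ℕ) (a b : ℕ → ℕ) (i p : ℕ) :
    ArrowRing K :=
  ∑ᶠ P ∈ Tset α β e a b i p, aP P

/-- Same, except that the empty path (length `0`) counts with coefficient `1`. -/
noncomputable def shat (K : Type*) [Field K] (α β e : ℕ) (a b : ℕ → ℕ) (i p : ℕ) :
    ArrowRing K :=
  if p = 0 then 1 else pathSum K α β e a b i p

variable {α β e : ℕ} {a b : ℕ → ℕ}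

lemma Tset_len_zero (i : ℕ) : Tset α β e a b i 0 = ∅ := by
  ext P
  simp only [Tset, Set.mem_setOf_eq, Set.mem_empty_iff_false, iff_false, not_and]
  intro hP hp
  have := path_plen_pos hP
  omega

lemma Tset_idx_zero (p : ℕ) : Tset α β e a b 0 p = ∅ := by
  ext P
  simp only [Tset, Set.mem_setOf_eq, Set.mem_empty_iff_false, iff_false, not_and]
  intro hP hp
  have := path_one_le hP
  omega

lemma pathSum_len_zero (i : ℕ) : pathSum K α β e a b i 0 = 0 := by
  rw [pathSum, Tset_len_zero, finsum_mem_empty]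

lemma pathSum_idx_zero (p : ℕ) : pathSum K α β e a b 0 p = 0 := by
  rw [pathSum, Tset_idx_zero, finsum_mem_empty]

lemma shat_zero (i : ℕ) : shat K α β e a b i 0 = 1 := by simp [shat]

lemma shat_pos {p : ℕ} (hp : 1 ≤ p) (i : ℕ) :
    shat K α β e a b i p = pathSum K α β e a b i p := by
  rw [shat, if_neg (by omega)]

variable (hα : 0 < α) (hb : ∀ i, i < e → b i < b (i + 1)) (hb0 : b 0 = 0)

include hα hb hb0 in
lemma pathSum_big {i p : ℕ} (hie : i ≤ e) (h : b i < p * α) :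
    pathSum K α β e a b i p = 0 := by
  have : Tset α β e a b i p = ∅ := by
    ext P
    simp only [Tset, Set.mem_setOf_eq, Set.mem_empty_iff_false, iff_false, not_and]
    intro hP hp
    have h2 := path_plen_le hα hb hb0 hP hie
    rw [hp] at h2
    omega
  rw [pathSum, this, finsum_mem_empty]

/-- The cone of paths from `m_i` starting with the arrow `c_i^ℓ`, of total length `p`. -/
def Cset (α β e : ℕ) (a b : ℕ → ℕ) (i ℓ p : ℕ) : Set (List (ℕ × ℕ)) :=
  ((fun P => (i, ℓ) :: P) '' Tset α β e a b (jOf e b (b i - ℓ * α)) (p - ℓ)) ∪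
  (if ℓ = p then {[(i, ℓ)]} else ∅)

lemma Cset_shape {i ℓ p : ℕ} {P : List (ℕ × ℕ)} (h : P ∈ Cset α β e a b i ℓ p) :
    ∃ R, P = (i, ℓ) :: R := by
  rcases h with ⟨P', _, rfl⟩ | h
  · exact ⟨P', rfl⟩
  · by_cases hlp : ℓ = p
    · rw [if_pos hlp] at h
      exact ⟨[], h⟩
    · rw [if_neg hlp] at h
      exact absurd h (Set.notMem_empty P)

lemma Cset_finite (i ℓ p : ℕ) : (Cset α β e a b i ℓ p).Finite := by
  apply Set.Finite.union ((Tset_finite _ _).image _)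
  split
  · exact Set.finite_singleton _
  · exact Set.finite_empty

lemma Tset_decomp {i p : ℕ} (h1 : 1 ≤ i) :
    Tset α β e a b i p =
      Tset α β e a b (i - 1) p ∪ ⋃ ℓ ∈ Aset α β e a b i, Cset α β e a b i ℓ p := by
  ext P
  constructor
  · rintro ⟨hP, hplen⟩
    cases hP with
    | single i' ℓ hA =>
      right
      refine Set.mem_biUnion hA (Or.inr ?_)
      have hlp : ℓ = p := by rw [← hplen, plen_single]
      rw [if_pos hlp]
      exact rfl
    | prev i' P' hge hP' =>
      left
      exact ⟨hP', hplen⟩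
    | cons i' ℓ P' hA hne hP' =>
      right
      refine Set.mem_biUnion hA (Or.inl ?_)
      refine ⟨P', ⟨hP', ?_⟩, rfl⟩
      rw [plen_cons] at hplen
      have hplen' : ℓ + plen P' = p := hplen
      omega
  · rintro (⟨hP, hplen⟩ | hmem)
    · exact ⟨IsPath.prev i P h1 hP, hplen⟩
    · obtain ⟨ℓ, hℓ, hc⟩ := Set.mem_iUnion₂.mp hmem
      rcases hc with ⟨P', ⟨hP', hplen'⟩, rfl⟩ | hsing
      · have hpos := path_plen_pos hP'
        refine ⟨IsPath.cons i ℓ P' hℓ (path_ne_nil hP') hP', ?_⟩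
        rw [plen_cons]
        show ℓ + plen P' = p
        omega
      · by_cases hlp : ℓ = p
        · rw [if_pos hlp] at hsing
          rw [Set.mem_singleton_iff] at hsing
          subst hsing
          refine ⟨IsPath.single i ℓ hℓ, ?_⟩
          rw [plen_single]
          exact hlp
        · rw [if_neg hlp] at hsing
          exact absurd hsing (Set.notMem_empty P)

include hα hb hb0 in
lemma pathSum_decomp {i p : ℕ} (h1 : 1 ≤ i) :
    pathSum K α β e a b i p =
      pathSum K α β e a b (i - 1) p +
        ∑ᶠ ℓ ∈ Aset α β e a b i,
          ((X (i, ℓ) : ArrowRing K) *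
              pathSum K α β e a b (jOf e b (b i - ℓ * α)) (p - ℓ) +
            if ℓ = p then (X (i, ℓ) : ArrowRing K) else 0) := by
  have disj1 : Disjoint (Tset α β e a b (i - 1) p)
      (⋃ ℓ ∈ Aset α β e a b i, Cset α β e a b i ℓ p) := by
    rw [Set.disjoint_left]
    intro P hP hmem
    obtain ⟨ℓ, hℓ, hc⟩ := Set.mem_iUnion₂.mp hmem
    obtain ⟨R, rfl⟩ := Cset_shape hc
    have h2 : ((i, ℓ) : ℕ × ℕ).1 ≤ i - 1 :=
      path_idx_le hα hb hb0 hP.1 (i, ℓ) List.mem_cons_self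
    have h3 : i ≤ i - 1 := h2
    omega
  have pairwise : (Aset α β e a b i).PairwiseDisjoint (fun ℓ => Cset α β e a b i ℓ p) := by
    intro ℓ hℓ ℓ' hℓ' hne
    rw [Function.onFun, Set.disjoint_left]
    intro P hPl hPl'
    obtain ⟨R, rfl⟩ := Cset_shape hPl
    obtain ⟨R', hR'⟩ := Cset_shape hPl'
    have : ((i, ℓ) : ℕ × ℕ) = (i, ℓ') := by
      have := (List.cons.injEq _ _ _ _).mp hR'
      exact this.1
    exact hne (by simpa using this)
  rw [pathSum, Tset_decomp h1,
    finsum_mem_union disj1 (Tset_finite _ _)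
      (Set.Finite.biUnion (Aset_finite hα i) fun ℓ _ => Cset_finite _ _ _),
    finsum_mem_biUnion pairwise (Aset_finite hα i) (fun ℓ _ => Cset_finite _ _ _)]
  rw [← pathSum]
  congr 1
  apply finsum_mem_congr rfl
  intro ℓ hℓ
  have disj3 : Disjoint
      ((fun P => (i, ℓ) :: P) '' Tset α β e a b (jOf e b (b i - ℓ * α)) (p - ℓ))
      (if ℓ = p then ({[(i, ℓ)]} : Set (List (ℕ × ℕ))) else ∅) := by
    split
    · rw [Set.disjoint_left]
      rintro P ⟨P', hP', rfl⟩ hs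
      rw [Set.mem_singleton_iff] at hs
      have : P' = [] := by
        have := (List.cons.injEq _ _ _ _).mp hs
        exact this.2
      exact (path_ne_nil hP'.1) this
    · exact Set.disjoint_empty _
  rw [Cset, finsum_mem_union disj3 ((Tset_finite _ _).image _)
    (by split
        · exact Set.finite_singleton _
        · exact Set.finite_empty)]
  congr 1
  · rw [finsum_mem_image (fun P1 _ P2 _ h => ((List.cons.injEq _ _ _ _).mp h).2)]
    rw [finsum_mem_congr rfl (fun P' _ => aP_cons (K := K) (i, ℓ) P'),
      finsum_mem_mul_left (Tset_finite _ _), ← pathSum]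
  · split
    · rw [finsum_mem_singleton, aP_single]
    · rw [finsum_mem_empty]

include hα hb hb0 in
lemma coeff_id {i : ℕ} (h1 : 1 ≤ i) (hie : i ≤ e) (p : ℕ) :
    shat K α β e a b i p = shat K α β e a b (i - 1) p +
      ∑ᶠ ℓ ∈ Aset α β e a b i,
        (if ℓ ≤ p then
          (X (i, ℓ) : ArrowRing K) * shat K α β e a b (jOf e b (b i - ℓ * α)) (p - ℓ)
        else 0) := by
  rcases Nat.eq_zero_or_pos p with rfl | hp
  · rw [shat_zero, shat_zero]
    have : ∑ᶠ ℓ ∈ Aset α β e a b i,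
        (if ℓ ≤ 0 then
          (X (i, ℓ) : ArrowRing K) * shat K α β e a b (jOf e b (b i - ℓ * α)) (0 - ℓ)
        else 0) = ∑ᶠ ℓ ∈ Aset α β e a b i, (0 : ArrowRing K) := by
      apply finsum_mem_congr rfl
      intro ℓ hℓ
      have : 1 ≤ ℓ := hℓ.2.2.1
      rw [if_neg (by omega)]
    rw [this, finsum_mem_zero, add_zero]
  · rw [shat_pos hp, shat_pos hp, pathSum_decomp hα hb hb0 h1]
    congr 1
    apply finsum_mem_congr rfl
    intro ℓ hℓ
    have hl1 : 1 ≤ ℓ := hℓ.2.2.1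
    rcases lt_trichotomy ℓ p with h | h | h
    · rw [if_pos (le_of_lt h), shat_pos (by omega), if_neg (by omega), add_zero]
    · subst h
      rw [if_pos (le_refl ℓ), Nat.sub_self, shat_zero, pathSum_len_zero, mul_zero,
        zero_add, if_pos rfl, mul_one]
    · rw [if_neg (by omega), if_neg (by omega)]
      have : p - ℓ = 0 := by omega
      rw [this, pathSum_len_zero, mul_zero, add_zero]

end Sums


section GG

variable {K : Type*} [Field K]

/-- Index finset for the support of `G i`. -/
def Pfin (α : ℕ) (b : ℕ → ℕ) (i : ℕ) : Finset ℕ :=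
  (Finset.range (b i + 1)).filter (fun p => p * α ≤ b i)

/-- The closed-form candidate for `F i`. -/
noncomputable def Gpoly (K : Type*) [Field K] (α β e : ℕ) (a b : ℕ → ℕ) (i : ℕ) :
    XYRing K :=
  ∑ p ∈ Pfin α b i, xymon (a i + p * β, b i - p * α) (shat K α β e a b i p)

variable {α β e : ℕ} {a b : ℕ → ℕ}

lemma mem_Pfin (hα : 0 < α) {i p : ℕ} : p ∈ Pfin α b i ↔ p * α ≤ b i := by
  have h1 : p ≤ p * α := Nat.le_mul_of_pos_right p hα
  simp only [Pfin, Finset.mem_filter, Finset.mem_range]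
  constructor
  · exact fun h => h.2
  · intro h; exact ⟨by omega, h⟩

lemma pathsTo_eq (hβ : 0 < β) {i p : ℕ} (hpα : p * α ≤ b i) :
    pathsTo α β e a b i (a i + p * β, b i - p * α) = Tset α β e a b i p := by
  ext P
  simp only [pathsTo, Tset, Set.mem_setOf_eq]
  constructor
  · rintro ⟨hP, h1, h2⟩
    refine ⟨hP, ?_⟩
    have : plen P * β = p * β := by omega
    exact Nat.eq_of_mul_eq_mul_right hβ this
  · rintro ⟨hP, rfl⟩
    exact ⟨hP, rfl, by omega⟩

lemma MsetLt_eq (hα : 0 < α) (hβ : 0 < β) (hco : Nat.Coprime α β) {i : ℕ} :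
    MsetLt α β a b i =
      (fun p => (a i + p * β, b i - p * α)) '' {p | 1 ≤ p ∧ p * α ≤ b i} := by
  ext m
  constructor
  · rintro ⟨hlex, hdeg⟩
    have hdeg : α * m.1 + β * m.2 = α * a i + β * b i := hdeg
    have hlex' : m.2 < b i ∨ (m.2 = b i ∧ m.1 < a i) := hlex
    rcases hlex' with h | ⟨h2eq, h1lt⟩
    · -- m.2 < b i
      have hd1 : 1 ≤ b i - m.2 := by omega
      have e1 : m.2 + (b i - m.2) = b i := by omega
      have e2 : β * m.2 + β * (b i - m.2) = β * b i := by
        rw [← Nat.mul_add, e1]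
      have key : α * m.1 = α * a i + β * (b i - m.2) := by omega
      have hle : a i ≤ m.1 := by
        have : α * a i ≤ α * m.1 := by omega
        exact Nat.le_of_mul_le_mul_left this hα
      have e3 : m.1 = a i + (m.1 - a i) := by omega
      have e4 : α * (a i + (m.1 - a i)) = α * a i + α * (m.1 - a i) := Nat.mul_add _ _ _
      have key2 : β * (b i - m.2) = α * (m.1 - a i) := by
        rw [e3] at key; omega
      have hdvd : α ∣ (b i - m.2) :=
        hco.dvd_of_dvd_mul_left
          ⟨m.1 - a i, key2⟩
      obtain ⟨p, hp⟩ := hdvd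
      have hp1 : 1 ≤ p := by
        rcases Nat.eq_zero_or_pos p with rfl | h'
        · omega
        · exact h'
      have hpa : p * α = b i - m.2 := by rw [hp, mul_comm]
      have hk : m.1 - a i = p * β := by
        have : α * (p * β) = α * (m.1 - a i) := by
          rw [← key2, hp]; ring
        have := Nat.eq_of_mul_eq_mul_left hα this
        omega
      refine ⟨p, ⟨hp1, by omega⟩, ?_⟩
      show (a i + p * β, b i - p * α) = m
      have : (a i + p * β, b i - p * α) = (m.1, m.2) := by
        rw [Prod.mk.injEq]
        omega
      rw [this]
    · -- m.2 = b i, m.1 < a i: impossible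
      exfalso
      rw [h2eq] at hdeg
      have : α * m.1 = α * a i := by omega
      have := Nat.eq_of_mul_eq_mul_left hα this
      omega
  · rintro ⟨p, ⟨hp1, hpα⟩, rfl⟩
    have hpos : 0 < p * α := Nat.mul_pos hp1 hα
    refine ⟨Or.inl (by simp only; omega), ?_⟩
    show α * (a i + p * β) + β * (b i - p * α) = α * a i + β * b i
    have e3 : β * (b i - p * α) + β * (p * α) = β * b i := by
      rw [← Nat.mul_add]
      congr 1
      omega
    have e4 : α * (a i + p * β) = α * a i + α * (p * β) := Nat.mul_add _ _ _
    have e5 : α * (p * β) = β * (p * α) := by ring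
    omega

lemma closed_eq_G (hα : 0 < α) (hβ : 0 < β) (hco : Nat.Coprime α β) {i : ℕ} :
    xymon (a i, b i) 1 +
      (∑ᶠ m ∈ MsetLt α β a b i,
        xymon m (∑ᶠ P ∈ pathsTo α β e a b i m, aP (K := K) P)) =
    Gpoly K α β e a b i := by
  have hinj : Set.InjOn (fun p => ((a i + p * β, b i - p * α) : ℕ × ℕ))
      {p | 1 ≤ p ∧ p * α ≤ b i} := by
    intro p _ q _ h
    rw [Prod.mk.injEq] at h
    have : p * β = q * β := by omega
    exact Nat.eq_of_mul_eq_mul_right hβ this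
  rw [MsetLt_eq hα hβ hco, finsum_mem_image hinj]
  have hset : {p | 1 ≤ p ∧ p * α ≤ b i} = ↑((Pfin α b i).erase 0) := by
    ext p
    simp only [Set.mem_setOf_eq, Finset.coe_erase, Set.mem_diff, Finset.mem_coe,
      mem_Pfin hα, Set.mem_singleton_iff]
    omega
  have hcong : ∀ p ∈ {p : ℕ | 1 ≤ p ∧ p * α ≤ b i},
      xymon ((a i + p * β, b i - p * α) : ℕ × ℕ)
          (∑ᶠ P ∈ pathsTo α β e a b i (a i + p * β, b i - p * α), aP (K := K) P) =
        xymon ((a i + p * β, b i - p * α) : ℕ × ℕ) (shat K α β e a b i p) := by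
    intro p hp
    rw [pathsTo_eq hβ hp.2, ← pathSum, shat_pos hp.1]
  rw [finsum_mem_congr rfl hcong, hset, finsum_mem_coe_finset]
  have h0 : 0 ∈ Pfin α b i := by rw [mem_Pfin hα]; omega
  rw [Gpoly, ← Finset.add_sum_erase _ _ h0]
  have hm : ((a i, b i) : ℕ × ℕ) = (a i + 0 * β, b i - 0 * α) := by simp
  rw [shat_zero, ← hm]

end GG


section Grec

variable {K : Type*} [Field K] {α β e : ℕ} {a b : ℕ → ℕ}

lemma G_rec (hα : 0 < α) (hβ : 0 < β) (ha : ∀ i, i < e → a (i + 1) < a i)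
    (hb : ∀ i, i < e → b i < b (i + 1)) (hb0 : b 0 = 0)
    {i : ℕ} (h1 : 1 ≤ i) (hie : i ≤ e) :
    xymon (a (i - 1) - a i, 0) (1 : ArrowRing K) * Gpoly K α β e a b i =
      xymon (0, b i - b (i - 1)) (1 : ArrowRing K) * Gpoly K α β e a b (i - 1) +
      ∑ᶠ ℓ ∈ {ℓ : ℕ | Arrow α β e a b i ℓ},
        xymon (a (i - 1) + ℓ * β - a (jOf e b (b i - ℓ * α)),
               b i - ℓ * α - b (jOf e b (b i - ℓ * α)))
          (X (i, ℓ) : ArrowRing K) * Gpoly K α β e a b (jOf e b (b i - ℓ * α)) := by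
  have haii : a i ≤ a (i - 1) := a_anti ha (Nat.sub_le i 1) hie
  have hbii : b (i - 1) ≤ b i := b_mono hb (Nat.sub_le i 1) hie
  have hi1e : i - 1 ≤ e := le_trans (Nat.sub_le i 1) hie
  -- left-hand side
  have hL : xymon (a (i - 1) - a i, 0) (1 : ArrowRing K) * Gpoly K α β e a b i =
      ∑ p ∈ Pfin α b i,
        xymon (a (i - 1) + p * β, b i - p * α) (shat K α β e a b i p) := by
    rw [Gpoly, Finset.mul_sum]
    apply Finset.sum_congr rfl
    intro p _
    rw [xymon_mul, one_mul, Prod.mk_add_mk]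
    congr 1
    rw [Prod.mk.injEq]
    constructor <;> omega
  -- first right-hand term
  have hR1 : xymon (0, b i - b (i - 1)) (1 : ArrowRing K) * Gpoly K α β e a b (i - 1) =
      ∑ p ∈ Pfin α b i,
        xymon (a (i - 1) + p * β, b i - p * α) (shat K α β e a b (i - 1) p) := by
    rw [Gpoly, Finset.mul_sum]
    trans (∑ p ∈ Pfin α b (i - 1),
        xymon (a (i - 1) + p * β, b i - p * α) (shat K α β e a b (i - 1) p))
    · apply Finset.sum_congr rfl
      intro p hp
      have hpα : p * α ≤ b (i - 1) := (mem_Pfin hα).mp hp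
      rw [xymon_mul, one_mul, Prod.mk_add_mk]
      congr 1
      rw [Prod.mk.injEq]
      constructor <;> omega
    · apply Finset.sum_subset
      · intro p hp
        rw [mem_Pfin hα] at hp ⊢
        omega
      · intro p hp hnp
        rw [mem_Pfin hα] at hp hnp
        push_neg at hnp
        rcases Nat.eq_zero_or_pos p with rfl | hp1
        · rw [Nat.zero_mul] at hnp; omega
        · rw [shat_pos hp1, pathSum_big hα hb hb0 hi1e hnp, xymon_zero]
  -- the arrow terms
  have hper : ∀ ℓ ∈ (Aset_finite (α := α) (β := β) (e := e) (a := a) (b := b) hα i).toFinset,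
      xymon (a (i - 1) + ℓ * β - a (jOf e b (b i - ℓ * α)),
             b i - ℓ * α - b (jOf e b (b i - ℓ * α)))
          (X (i, ℓ) : ArrowRing K) * Gpoly K α β e a b (jOf e b (b i - ℓ * α)) =
        ∑ p ∈ Pfin α b i,
          xymon (a (i - 1) + p * β, b i - p * α)
            (if ℓ ≤ p then
              (X (i, ℓ) : ArrowRing K) *
                shat K α β e a b (jOf e b (b i - ℓ * α)) (p - ℓ)
            else 0) := by
    intro ℓ hℓA
    rw [Set.Finite.mem_toFinset] at hℓA
    set j := jOf e b (b i - ℓ * α) with hj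
    have hje : j ≤ e := jOf_le _
    have hbj : b j ≤ b i - ℓ * α := b_jOf hb0 _
    have haj : a j ≤ a (i - 1) + ℓ * β := arrow_a_jOf_le ha hb0 hℓA
    have hla : ℓ * α ≤ b i := hℓA.2.2.2.1
    have hl1 : 1 ≤ ℓ := hℓA.2.2.1
    rw [Gpoly, Finset.mul_sum]
    trans (∑ q ∈ Pfin α b j,
        xymon (a (i - 1) + (ℓ + q) * β, b i - (ℓ + q) * α)
          ((X (i, ℓ) : ArrowRing K) * shat K α β e a b j q))
    · apply Finset.sum_congr rfl
      intro q hq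
      have hqα : q * α ≤ b j := (mem_Pfin hα).mp hq
      rw [xymon_mul, Prod.mk_add_mk]
      congr 1
      rw [Prod.mk.injEq]
      have e1 : (ℓ + q) * β = ℓ * β + q * β := Nat.add_mul _ _ _
      have e2 : (ℓ + q) * α = ℓ * α + q * α := Nat.add_mul _ _ _
      constructor <;> omega
    trans (∑ p ∈ (Pfin α b j).image (fun q => ℓ + q),
        xymon (a (i - 1) + p * β, b i - p * α)
          ((X (i, ℓ) : ArrowRing K) * shat K α β e a b j (p - ℓ)))
    · rw [Finset.sum_image (by intro x _ y _ h; dsimp only at h; omega)]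
      apply Finset.sum_congr rfl
      intro q _
      have : ℓ + q - ℓ = q := by omega
      rw [this]
    trans (∑ p ∈ (Pfin α b j).image (fun q => ℓ + q),
        xymon (a (i - 1) + p * β, b i - p * α)
          (if ℓ ≤ p then
            (X (i, ℓ) : ArrowRing K) * shat K α β e a b j (p - ℓ)
          else 0))
    · apply Finset.sum_congr rfl
      intro p hp
      obtain ⟨q, _, rfl⟩ := Finset.mem_image.mp hp
      rw [if_pos (by omega)]
    · apply Finset.sum_subset
      · intro p hp
        obtain ⟨q, hq, rfl⟩ := Finset.mem_image.mp hp
        rw [mem_Pfin hα] at hq ⊢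
        have e2 : (ℓ + q) * α = ℓ * α + q * α := Nat.add_mul _ _ _
        omega
      · intro p hp hnp
        rw [mem_Pfin hα] at hp
        by_cases hlep : ℓ ≤ p
        · have hq : p - ℓ ∉ Pfin α b j := by
            intro hq
            exact hnp (Finset.mem_image.mpr ⟨p - ℓ, hq, by omega⟩)
          rw [mem_Pfin hα] at hq
          push_neg at hq
          have hpl1 : 1 ≤ p - ℓ := by
            rcases Nat.eq_zero_or_pos (p - ℓ) with h0 | h
            · rw [h0, Nat.zero_mul] at hq; omega
            · exact h
          rw [if_pos hlep, shat_pos hpl1, pathSum_big hα hb hb0 hje hq, mul_zero,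
            xymon_zero]
        · rw [if_neg hlep, xymon_zero]
  have hAs : (∑ᶠ ℓ ∈ {ℓ : ℕ | Arrow α β e a b i ℓ},
      xymon (a (i - 1) + ℓ * β - a (jOf e b (b i - ℓ * α)),
             b i - ℓ * α - b (jOf e b (b i - ℓ * α)))
        (X (i, ℓ) : ArrowRing K) * Gpoly K α β e a b (jOf e b (b i - ℓ * α))) =
      ∑ p ∈ Pfin α b i,
        xymon (a (i - 1) + p * β, b i - p * α)
          (∑ᶠ ℓ ∈ Aset α β e a b i,
            (if ℓ ≤ p then
              (X (i, ℓ) : ArrowRing K) *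
                shat K α β e a b (jOf e b (b i - ℓ * α)) (p - ℓ)
            else 0)) := by
    rw [show {ℓ : ℕ | Arrow α β e a b i ℓ} = Aset α β e a b i from rfl]
    rw [fsum_toFinset (Aset_finite hα i)]
    rw [Finset.sum_congr rfl hper, Finset.sum_comm]
    apply Finset.sum_congr rfl
    intro p _
    rw [fsum_toFinset (Aset_finite hα i), xymon_sum]
  rw [hL, hR1, hAs, ← Finset.sum_add_distrib]
  apply Finset.sum_congr rfl
  intro p _
  rw [← xymon_add]
  congr 1
  exact coeff_id hα hb hb0 h1 hie p

end Grec

end EvainAux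

theorem evain_closed_form {K : Type*} [Field K] (α β e : ℕ) (a b : ℕ → ℕ)
    (hdata : MonIdealData α β e a b)
    (F : ℕ → XYRing K) (hF : EvainRec α β e a b F) :
    ∀ i ≤ e, F i = xymon (a i, b i) 1 +
      ∑ᶠ m ∈ MsetLt α β a b i,
        xymon m (∑ᶠ P ∈ pathsTo α β e a b i m, aP P) := by
  open EvainAux in
  obtain ⟨hα, hβ, hco, ha, hb, hb0, hae⟩ := hdata
  suffices key : ∀ i, i ≤ e → F i = EvainAux.Gpoly K α β e a b i by
    intro i hie
    rw [key i hie, ← EvainAux.closed_eq_G hα hβ hco]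
  intro i
  induction i using Nat.strong_induction_on with
  | _ i IH =>
    intro hie
    rcases Nat.eq_zero_or_pos i with rfl | h1
    · rw [hF.1, EvainAux.Gpoly]
      have hP0 : EvainAux.Pfin α b 0 = {0} := by
        ext p
        rw [EvainAux.mem_Pfin hα, Finset.mem_singleton]
        have h2 : p ≤ p * α := Nat.le_mul_of_pos_right p hα
        constructor
        · intro h; omega
        · rintro rfl; simp
      rw [hP0, Finset.sum_singleton, EvainAux.shat_zero]
      congr 1
      rw [Prod.mk.injEq]
      constructor <;> omega
    · have hrec := hF.2 i h1 hie
      have hFi1 : F (i - 1) = EvainAux.Gpoly K α β e a b (i - 1) :=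
        IH (i - 1) (by omega) (by omega)
      have hFj : ∀ ℓ ∈ {ℓ : ℕ | Arrow α β e a b i ℓ},
          F (jOf e b (b i - ℓ * α)) =
            EvainAux.Gpoly K α β e a b (jOf e b (b i - ℓ * α)) := by
        intro ℓ hℓ
        have hlt : jOf e b (b i - ℓ * α) < i := EvainAux.arrow_jOf_lt hα hb hb0 hℓ
        exact IH _ hlt (le_trans (le_of_lt hlt) hie)
      rw [hFi1, finsum_mem_congr rfl (fun ℓ hℓ => by rw [hFj ℓ hℓ]),
        ← EvainAux.G_rec hα hβ ha hb hb0 h1 hie] at hrec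
      have hne : xymon (a (i - 1) - a i, 0) (1 : ArrowRing K) ≠ 0 :=
        EvainAux.xymon_one_ne_zero _
      exact mul_left_cancel₀ hne hrec
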